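/- Let c² > 1, K_W > 0, κ > K_W/(c²−1)², and define K* = (κ(c²−1)² − K_W)/(c²(c²−1)), Λ* = cK_W/(κ(c²−1)² − K_W), K_Z* = κ − (Λ*)²K*. Then K* satisfies the generalized algebraic Riccati equation K* = c²K* + K_W − (K_W + cK*(Λ*+c))²/(K_Z* + K_W + (Λ*+c)²K*). -/

import Mathlib

/-- The closed-form optimal feedback triple `(K*, Λ*, K_Z*)` satisfies the
generalized algebraic Riccati equation. -/
theorem stmt10 (c K_W κ : ℝ) (hc : 1 < c ^ 2) (hKW : 0 < K_W)
    (hκ : K_W / (c ^ 2 - 1) ^ 2 < κ) :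
    let Kstar := (κ * (c ^ 2 - 1) ^ 2 - K_W) / (c ^ 2 * (c ^ 2 - 1))
    let Λstar := c * K_W / (κ * (c ^ 2 - 1) ^ 2 - K_W)
    let KZstar := κ - Λstar ^ 2 * Kstar
    Kstar = c ^ 2 * Kstar + K_W -
      (K_W + c * Kstar * (Λstar + c)) ^ 2 /
        (KZstar + K_W + (Λstar + c) ^ 2 * Kstar) := by
  intro Kstar Λstar KZstar
  have hc0 : (0:ℝ) < c ^ 2 - 1 := by linarith
  have hD : 0 < κ * (c ^ 2 - 1) ^ 2 - K_W := by
    have h := (div_lt_iff₀ (by positivity : (0:ℝ) < (c ^ 2 - 1) ^ 2)).mp hκ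
    linarith
  have hκ0 : 0 < κ := by nlinarith
  have hc2 : (0:ℝ) < c ^ 2 := by linarith
  have hcne : c ≠ 0 := by rintro rfl; norm_num at hc
  have key : KZstar + K_W + (Λstar + c) ^ 2 * Kstar =
      ((κ + K_W) * (c ^ 2 - 1) * (κ * (c ^ 2 - 1) ^ 2 - K_W) +
        (κ * (c ^ 2 - 1) ^ 2 - K_W) * (κ * (c ^ 2 - 1) ^ 2 + K_W)) /
      ((κ * (c ^ 2 - 1) ^ 2 - K_W) * (c ^ 2 - 1)) := by
    simp only [Kstar, Λstar, KZstar]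
    field_simp
    ring
  have hden : 0 < KZstar + K_W + (Λstar + c) ^ 2 * Kstar := by
    rw [key]
    apply div_pos
    · have h1 : 0 < (κ + K_W) * (c ^ 2 - 1) * (κ * (c ^ 2 - 1) ^ 2 - K_W) := by positivity
      have h2 : 0 < (κ * (c ^ 2 - 1) ^ 2 - K_W) * (κ * (c ^ 2 - 1) ^ 2 + K_W) := by positivity
      linarith
    · positivity
  have hgoal : (K_W + c * Kstar * (Λstar + c)) ^ 2 /
      (KZstar + K_W + (Λstar + c) ^ 2 * Kstar) = c ^ 2 * Kstar + K_W - Kstar := by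
    rw [div_eq_iff hden.ne']
    simp only [Kstar, Λstar, KZstar]
    field_simp
    ring
  linarith [hgoal]
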